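/- Let X be a nonempty set, p a partial metric on X, and {x_n}, {y_n} two sequences in X such that p(x_n, y_n) → 0 as n → ∞. If {y_n} is rough statistically convergent to y with roughness degree r ≥ 0 and there is a positive number d such that p(y_n, y_n) ≤ d for all n, then {x_n} is rough statistically convergent to y with roughness degree r + d. -/

import Mathlib

/-- A partial metric on a set `X`. -/
structure IsPartialMetric {X : Type*} (p : X → X → ℝ) : Prop where
  nonneg : ∀ x y : X, 0 ≤ p x y
  self_le : ∀ x y : X, p x x ≤ p x y
  eq_iff : ∀ x y : X, x = y ↔ p x x = p x y ∧ p x y = p y y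
  symm : ∀ x y : X, p x y = p y x
  triangle : ∀ x y z : X, p x y ≤ p x z + p z y - p z z

open Classical in
/-- `A ⊆ ℕ` has natural density `d`. -/
def HasNatDensity (A : Set ℕ) (d : ℝ) : Prop :=
  Filter.Tendsto
    (fun n : ℕ => (((Finset.range n).filter (fun k => k ∈ A)).card : ℝ) / (n : ℝ))
    Filter.atTop (nhds d)

/-- `l` is a rough statistical limit point of the sequence `x` with roughness degree `r`,
i.e. `l ∈ st-LIM^r x_n`. -/
def RStatLimit {X : Type*} (p : X → X → ℝ) (x : ℕ → X) (r : ℝ) (l : X) : Prop :=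
  ∀ ε : ℝ, 0 < ε → HasNatDensity {n : ℕ | r + ε ≤ |p (x n) l - p l l|} 0

open Classical in
lemma hasNatDensity_zero_mono {A B : Set ℕ} (h : A ⊆ B) (hB : HasNatDensity B 0) :
    HasNatDensity A 0 := by
  refine squeeze_zero (fun n => by positivity) (fun n => ?_) hB
  gcongr

open Classical in
lemma hasNatDensity_zero_union {A B : Set ℕ} (hA : HasNatDensity A 0)
    (hB : HasNatDensity B 0) : HasNatDensity (A ∪ B) 0 := by
  have lim : Filter.Tendsto
      (fun n : ℕ => (((Finset.range n).filter (fun k => k ∈ A)).card : ℝ) / n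
        + (((Finset.range n).filter (fun k => k ∈ B)).card : ℝ) / n)
      Filter.atTop (nhds 0) := by
    simpa using hA.add hB
  refine squeeze_zero (fun n => by positivity) (fun n => ?_) lim
  rw [← add_div]
  gcongr
  have hsub : (@Finset.filter ℕ (fun k => k ∈ A ∪ B)
      (fun a => Classical.propDecidable _) (Finset.range n))
      ⊆ ((Finset.range n).filter (fun k => k ∈ A))
        ∪ ((Finset.range n).filter (fun k => k ∈ B)) := by
    intro k hk
    simp only [Finset.mem_filter, Finset.mem_union, Set.mem_union] at *
    tauto
  have key := le_trans (Finset.card_le_card hsub) (Finset.card_union_le _ _)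
  exact_mod_cast key

open Classical in
lemma hasNatDensity_zero_of_bdd {A : Set ℕ} (N : ℕ) (h : ∀ n ∈ A, n < N) :
    HasNatDensity A 0 := by
  have lim : Filter.Tendsto (fun n : ℕ => (N : ℝ) / n) Filter.atTop (nhds 0) :=
    tendsto_const_div_atTop_nhds_zero_nat (N : ℝ)
  refine squeeze_zero (fun n => by positivity) (fun n => ?_) lim
  have hsub : ((Finset.range n).filter (fun k => k ∈ A)) ⊆ Finset.range N := by
    intro k hk
    simp only [Finset.mem_filter, Finset.mem_range] at *
    exact h k hk.2
  have key := Finset.card_le_card hsub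
  rw [Finset.card_range] at key
  gcongr

/-- If `p (x_n, y_n) → 0`, `y_n` is `r`-statistically convergent to `y`, and the
self-distances satisfy `p (y_n, y_n) ≤ d` for all `n` with `d > 0`, then `x_n` is
`(r + d)`-statistically convergent to `y`. -/
theorem rStatLimit_transfer_add'
    {X : Type*} [Nonempty X] (p : X → X → ℝ) (hp : IsPartialMetric p)
    (x y : ℕ → X)
    (hxy : Filter.Tendsto (fun n : ℕ => p (x n) (y n)) Filter.atTop (nhds 0))
    (l : X) (r : ℝ) (hr : 0 ≤ r) (hy : RStatLimit p y r l)
    (d : ℝ) (hd : 0 < d) (hselfy : ∀ n : ℕ, p (y n) (y n) ≤ d) :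
    RStatLimit p x (r + d) l := by
  intro ε hε
  have hε2 : 0 < ε / 2 := by linarith
  have key : ∀ n, |p (x n) l - p (y n) l| ≤ p (x n) (y n) := by
    intro n
    rw [abs_sub_le_iff]
    constructor
    · have t := hp.triangle (x n) l (y n)
      have := hp.nonneg (y n) (y n)
      linarith
    · have t := hp.triangle (y n) l (x n)
      have := hp.nonneg (x n) (x n)
      rw [hp.symm (y n) (x n)] at t
      linarith
  have hev : ∀ᶠ n in Filter.atTop, p (x n) (y n) < d + ε / 2 :=
    hxy.eventually_lt_const (by linarith)
  obtain ⟨N, hN⟩ := Filter.eventually_atTop.mp hev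
  refine hasNatDensity_zero_mono ?_
    (hasNatDensity_zero_union (hy (ε / 2) hε2)
      (hasNatDensity_zero_of_bdd (A := {n : ℕ | d + ε / 2 ≤ p (x n) (y n)}) N
        (fun n hn => ?_)))
  · intro n hn
    simp only [Set.mem_setOf_eq, Set.mem_union] at *
    by_contra hc
    push_neg at hc
    obtain ⟨h1, h2⟩ := hc
    have habs := abs_sub_le (p (x n) l) (p (y n) l) (p l l)
    have := key n
    linarith
  · by_contra hNle
    push_neg at hNle
    exact absurd (hN n hNle) (not_lt.mpr hn)
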